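/- For each m ≥ 1 let q(m) = (q_1,…,q_{d(m)}) be a probability mass function with all entries positive, where d = d(m) → ∞ and q_max(m) := max_{1 ≤ i ≤ d(m)} q_i → 0 as m → ∞. Let (U_i^{(m)})_{1 ≤ i ≤ d(m)} be i.i.d. random variables uniformly distributed on (0,1), and define W_m(t) := Σ_{i=1}^{d(m)} q_i 1{U_i^{(m)} ≤ t} − t for t ∈ [0,1]. Then sup_{t∈[0,1]} |W_m(t)| → 0 in probability as m → ∞; that is, for every ε > 0, P( sup_{t∈[0,1]} |W_m(t)| > ε ) → 0 as m → ∞. -/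

import Mathlib

open MeasureTheory Filter

open Set ProbabilityTheory

noncomputable def mu0 : Measure ℝ := volume.restrict (Set.Ioo (0:ℝ) 1)

instance : IsProbabilityMeasure mu0 := ⟨by simp [mu0, Real.volume_Ioo]⟩

lemma mu0_Iic {t : ℝ} (h0 : 0 ≤ t) (h1 : t ≤ 1) : mu0 (Set.Iic t) = ENNReal.ofReal t := by
  rw [mu0, Measure.restrict_apply measurableSet_Iic]
  apply le_antisymm
  · calc volume (Set.Iic t ∩ Set.Ioo 0 1) ≤ volume (Set.Ioc 0 t) := by
          apply measure_mono; rintro x ⟨hx1, hx2, _⟩; exact ⟨hx2, hx1⟩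
      _ = ENNReal.ofReal t := by simp [Real.volume_Ioc]
  · calc ENNReal.ofReal t = volume (Set.Ioo 0 t) := by simp [Real.volume_Ioo]
      _ ≤ volume (Set.Iic t ∩ Set.Ioo 0 1) := by
          apply measure_mono; rintro x ⟨hx1, hx2⟩
          exact ⟨hx2.le, hx1, hx2.trans_le h1⟩

lemma meas_ind (t : ℝ) : Measurable (fun u : ℝ => if u ≤ t then (1:ℝ) else 0) :=
  Measurable.ite measurableSet_Iic measurable_const measurable_const

lemma integral_ind {t : ℝ} (h0 : 0 ≤ t) (h1 : t ≤ 1) :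
    ∫ u, (if u ≤ t then (1:ℝ) else 0) ∂mu0 = t := by
  have : ∀ u : ℝ, (if u ≤ t then (1:ℝ) else 0) = (Set.Iic t).indicator (1 : ℝ → ℝ) u := by
    intro u; by_cases h : u ≤ t <;> simp [Set.indicator_apply, Set.mem_Iic, h]
  simp_rw [this]
  rw [integral_indicator_one measurableSet_Iic, measureReal_def, mu0_Iic h0 h1, ENNReal.toReal_ofReal h0]

noncomputable def Pn (n : ℕ) : Measure (Fin n → ℝ) := Measure.pi (fun _ : Fin n => mu0)

instance (n : ℕ) : IsProbabilityMeasure (Pn n) := by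
  unfold Pn; infer_instance

lemma eval_preimage_meas {n : ℕ} (i : Fin n) {s : Set ℝ} (hs : MeasurableSet s) :
    Pn n ((fun ω : Fin n → ℝ => ω i) ⁻¹' s) = mu0 s := by
  classical
  have : (fun ω : Fin n → ℝ => ω i) ⁻¹' s
      = Set.pi Set.univ (Function.update (fun _ : Fin n => (Set.univ : Set ℝ)) i s) :=
    Set.eval_preimage
  rw [this, Pn, Measure.pi_pi]
  have h2 : ∀ j : Fin n, mu0 (Function.update (fun _ : Fin n => (Set.univ : Set ℝ)) i s j)
      = Function.update (fun _ : Fin n => (1 : ENNReal)) i (mu0 s) j := by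
    intro j
    by_cases hj : j = i
    · subst hj; simp
    · simp [Function.update_of_ne hj]
  rw [Finset.prod_congr rfl (fun j _ => h2 j), Finset.prod_update_of_mem (Finset.mem_univ i)]
  simp

lemma measPres_eval {n : ℕ} (i : Fin n) :
    MeasurePreserving (fun ω : Fin n → ℝ => ω i) (Pn n) mu0 := by
  refine ⟨measurable_pi_apply i, ?_⟩
  refine Measure.ext fun s hs => ?_
  rw [Measure.map_apply (measurable_pi_apply i) hs, eval_preimage_meas i hs]

lemma indep_eval {n : ℕ} {i j : Fin n} (hij : i ≠ j) :
    IndepFun (fun ω : Fin n → ℝ => ω i) (fun ω : Fin n → ℝ => ω j) (Pn n) := by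
  classical
  rw [indepFun_iff_measure_inter_preimage_eq_mul]
  intro s t hs ht
  rw [eval_preimage_meas i hs, eval_preimage_meas j ht]
  have h1 : (fun ω : Fin n → ℝ => ω i) ⁻¹' s ∩ (fun ω : Fin n → ℝ => ω j) ⁻¹' t
      = Set.pi Set.univ (fun k => Function.update (fun _ : Fin n => (Set.univ : Set ℝ)) i s k
          ∩ Function.update (fun _ : Fin n => (Set.univ : Set ℝ)) j t k) := by
    rw [Set.pi_inter_distrib, ← Set.eval_preimage, ← Set.eval_preimage]
  rw [h1, Pn, Measure.pi_pi]
  have h2 : ∀ k : Fin n,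
      mu0 (Function.update (fun _ : Fin n => (Set.univ : Set ℝ)) i s k
        ∩ Function.update (fun _ : Fin n => (Set.univ : Set ℝ)) j t k)
      = (if k = i then mu0 s else 1) * (if k = j then mu0 t else 1) := by
    intro k
    by_cases hki : k = i
    · subst hki
      simp [Function.update_of_ne hij, hij]
    · by_cases hkj : k = j
      · subst hkj
        simp [Function.update_of_ne hki, hki]
      · simp [Function.update_of_ne hki, Function.update_of_ne hkj, hki, hkj]
  rw [Finset.prod_congr rfl (fun k _ => h2 k), Finset.prod_mul_distrib,
    Finset.prod_ite_eq' Finset.univ i (fun _ => mu0 s),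
    Finset.prod_ite_eq' Finset.univ j (fun _ => mu0 t)]
  simp

lemma integral_eval {n : ℕ} (i : Fin n) {g : ℝ → ℝ} (hg : Measurable g) :
    ∫ ω, g (ω i) ∂(Pn n) = ∫ u, g u ∂mu0 := by
  rw [← (measPres_eval i).map_eq,
    integral_map (measurable_pi_apply i).aemeasurable hg.aestronglyMeasurable]

lemma cheb {n : ℕ} (w : Fin n → ℝ) (hw_pos : ∀ i, 0 < w i) (hw_sum : ∑ i, w i = 1)
    (Q : ℝ) (hQ : ∀ i, w i ≤ Q) {t : ℝ} (h0 : 0 ≤ t) (h1 : t ≤ 1) {c : ℝ} (hc : 0 < c) :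
    Pn n {ω : Fin n → ℝ | c ≤ |(∑ i, w i * (if ω i ≤ t then (1:ℝ) else 0)) - t|}
      ≤ ENNReal.ofReal (Q / c ^ 2) := by
  classical
  set X : (Fin n → ℝ) → ℝ := fun ω => ∑ i, w i * (if ω i ≤ t then (1:ℝ) else 0) with hX
  set Xi : Fin n → (Fin n → ℝ) → ℝ := fun i ω => w i * (if ω i ≤ t then (1:ℝ) else 0) with hXi
  have measXi : ∀ i, Measurable (Xi i) := fun i =>
    ((meas_ind t).comp (measurable_pi_apply i)).const_mul (w i)
  have hXi2 : ∀ i, MemLp (Xi i) 2 (Pn n) := by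
    intro i
    refine MemLp.of_bound (measXi i).aestronglyMeasurable (w i) (ae_of_all _ fun ω => ?_)
    simp only [Xi, Real.norm_eq_abs]
    rw [abs_mul, abs_of_nonneg (hw_pos i).le]
    by_cases h : ω i ≤ t <;> simp [h, (hw_pos i).le]
  have hXsum : X = ∑ i, Xi i := by
    funext ω; simp [X, Xi]
  have hEXi : ∀ i, ∫ ω, Xi i ω ∂(Pn n) = w i * t := by
    intro i
    simp only [Xi]
    rw [integral_const_mul, integral_eval i (meas_ind t), integral_ind h0 h1]
  have hEX : ∫ ω, X ω ∂(Pn n) = t := by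
    simp only [hX]
    rw [integral_finset_sum _ (fun i _ => ((hXi2 i).integrable one_le_two))]
    simp_rw [hEXi]
    rw [← Finset.sum_mul, hw_sum, one_mul]
  have hX2 : MemLp X 2 (Pn n) := by
    rw [hXsum]; exact memLp_finset_sum' _ (fun i _ => hXi2 i)
  -- variance bound
  have hVi : ∀ i, variance (Xi i) (Pn n) ≤ w i * Q := by
    intro i
    have h1i : variance (Xi i) (Pn n)
        = (w i) ^ 2 * variance (fun ω : Fin n → ℝ => if ω i ≤ t then (1:ℝ) else 0) (Pn n) :=
      variance_const_mul (w i) _ _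
    have h2i : variance (fun ω : Fin n → ℝ => if ω i ≤ t then (1:ℝ) else 0) (Pn n) ≤ 1 := by
      have hm : AEStronglyMeasurable (fun ω : Fin n → ℝ => if ω i ≤ t then (1:ℝ) else 0)
          (Pn n) := ((meas_ind t).comp (measurable_pi_apply i)).aestronglyMeasurable
      refine (variance_le_expectation_sq hm).trans ?_
      have : ∀ ω : Fin n → ℝ, ((fun ω : Fin n → ℝ => if ω i ≤ t then (1:ℝ) else 0) ^ 2) ω
          = (if ω i ≤ t then (1:ℝ) else 0) := by
        intro ω; by_cases h : ω i ≤ t <;> simp [h]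
      rw [show ((fun ω : Fin n → ℝ => if ω i ≤ t then (1:ℝ) else 0) ^ 2)
          = fun ω : Fin n → ℝ => (if ω i ≤ t then (1:ℝ) else 0) from funext this]
      rw [integral_eval i (meas_ind t), integral_ind h0 h1]
      exact h1
    calc variance (Xi i) (Pn n) ≤ (w i) ^ 2 * 1 := by
          rw [h1i]
          exact mul_le_mul_of_nonneg_left h2i (sq_nonneg _)
      _ = w i * w i := by ring
      _ ≤ w i * Q := mul_le_mul_of_nonneg_left (hQ i) (hw_pos i).le
  have hVar : variance X (Pn n) ≤ Q := by
    rw [hXsum, IndepFun.variance_sum (fun i _ => hXi2 i) ?pair]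
    case pair =>
      intro i _ j _ hij
      exact (indep_eval hij).comp
        (((meas_ind t).const_mul (w i)) : Measurable fun x : ℝ => w i * (if x ≤ t then (1:ℝ) else 0))
        (((meas_ind t).const_mul (w j)) : Measurable fun x : ℝ => w j * (if x ≤ t then (1:ℝ) else 0))
    calc ∑ i, variance (Xi i) (Pn n) ≤ ∑ i, w i * Q := Finset.sum_le_sum fun i _ => hVi i
      _ = Q := by rw [← Finset.sum_mul, hw_sum, one_mul]
  have hcheb := meas_ge_le_variance_div_sq (μ := Pn n) hX2 hc
  rw [hEX] at hcheb
  refine hcheb.trans (ENNReal.ofReal_le_ofReal ?_)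
  exact div_le_div_of_nonneg_right hVar (by positivity) |>.trans le_rfl

lemma det {n k : ℕ} (hk : 1 ≤ k) {w : Fin n → ℝ} (hw : ∀ i, 0 < w i) (ω : Fin n → ℝ) {c : ℝ}
    (hgrid : ∀ j : Fin (k+1),
      |(∑ i, w i * (if ω i ≤ ((j : ℕ) : ℝ)/(k : ℝ) then (1:ℝ) else 0)) - ((j : ℕ) : ℝ)/(k : ℝ)| ≤ c)
    {t : ℝ} (h0 : 0 ≤ t) (h1 : t ≤ 1) :
    |(∑ i, w i * (if ω i ≤ t then (1:ℝ) else 0)) - t| ≤ c + 1/(k : ℝ) := by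
  set F : ℝ → ℝ := fun s => ∑ i, w i * (if ω i ≤ s then (1:ℝ) else 0) with hF
  have hmono : Monotone F := by
    intro a b hab
    apply Finset.sum_le_sum
    intro i _
    apply mul_le_mul_of_nonneg_left _ (hw i).le
    by_cases h : ω i ≤ a
    · simp [h, h.trans hab]
    · by_cases h' : ω i ≤ b <;> simp [h, h']
  have hkR : (0:ℝ) < (k : ℝ) := by exact_mod_cast hk
  set j0 : ℕ := min ⌊t * k⌋₊ (k - 1) with hj0
  have hj0k : j0 ≤ k - 1 := min_le_right _ _
  have hj0k' : j0 < k + 1 := by omega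
  have hj1k : j0 + 1 < k + 1 := by omega
  have ha : ((j0 : ℕ) : ℝ) / (k : ℝ) ≤ t := by
    rw [div_le_iff₀ hkR]
    calc ((j0 : ℕ) : ℝ) ≤ (⌊t * k⌋₊ : ℝ) := by exact_mod_cast min_le_left _ _
      _ ≤ t * k := Nat.floor_le (by positivity)
  have hb : t ≤ ((j0 + 1 : ℕ) : ℝ) / (k : ℝ) := by
    rw [le_div_iff₀ hkR]
    by_cases hcase : ⌊t * k⌋₊ ≤ k - 1
    · have hj : j0 = ⌊t * k⌋₊ := min_eq_left hcase
      rw [hj]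
      exact_mod_cast (Nat.lt_floor_add_one (t * k)).le
    · have hj : j0 = k - 1 := min_eq_right (le_of_not_ge hcase)
      have : ((j0 + 1 : ℕ) : ℝ) = (k : ℝ) := by
        rw [hj]; push_cast [Nat.sub_add_cancel hk]; ring
      rw [this]
      calc t * k ≤ 1 * k := mul_le_mul_of_nonneg_right h1 hkR.le
        _ = (k : ℝ) := one_mul _
  have hga : |F (((j0 : ℕ) : ℝ) / (k : ℝ)) - ((j0 : ℕ) : ℝ) / (k : ℝ)| ≤ c := hgrid ⟨j0, hj0k'⟩
  have hgb : |F (((j0 + 1 : ℕ) : ℝ) / (k : ℝ)) - ((j0 + 1 : ℕ) : ℝ) / (k : ℝ)| ≤ c :=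
    hgrid ⟨j0 + 1, hj1k⟩
  have hba : ((j0 + 1 : ℕ) : ℝ) / (k : ℝ) - ((j0 : ℕ) : ℝ) / (k : ℝ) = 1 / (k : ℝ) := by
    rw [div_sub_div_same]
    push_cast
    ring_nf
  have hFt1 : F t ≤ F (((j0 + 1 : ℕ) : ℝ) / (k : ℝ)) := hmono hb
  have hFt2 : F (((j0 : ℕ) : ℝ) / (k : ℝ)) ≤ F t := hmono ha
  have habs1 := (abs_le.1 hgb).2
  have habs2 := (abs_le.1 hga).1
  rw [abs_le]
  constructor
  · linarith
  · linarith

lemma key (n : ℕ) (w : Fin n → ℝ) (hw_pos : ∀ i, 0 < w i) (hw_sum : ∑ i, w i = 1)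
    (Q : ℝ) (hQ : ∀ i, w i ≤ Q) (ε : ℝ) (hε : 0 < ε) (k : ℕ) (hk : 1 ≤ k)
    (hk2 : (1:ℝ)/(k:ℝ) ≤ ε/2) :
    Pn n {ω : Fin n → ℝ |
        ε < ⨆ t : Set.Icc (0 : ℝ) 1,
          |(∑ i, w i * (if ω i ≤ (t : ℝ) then (1 : ℝ) else 0)) - (t : ℝ)|}
      ≤ ((k + 1 : ℕ) : ENNReal) * ENNReal.ofReal (Q / (ε/2) ^ 2) := by
  haveI : Nonempty (Set.Icc (0:ℝ) 1) := ⟨⟨0, by norm_num⟩⟩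
  set A : Fin (k+1) → Set (Fin n → ℝ) := fun j =>
    {ω : Fin n → ℝ | ε/2 ≤ |(∑ i, w i * (if ω i ≤ ((j : ℕ) : ℝ)/(k : ℝ) then (1:ℝ) else 0))
      - ((j : ℕ) : ℝ)/(k : ℝ)|} with hA
  have hsub : {ω : Fin n → ℝ |
      ε < ⨆ t : Set.Icc (0 : ℝ) 1,
        |(∑ i, w i * (if ω i ≤ (t : ℝ) then (1 : ℝ) else 0)) - (t : ℝ)|} ⊆ ⋃ j, A j := by
    intro ω hω
    by_contra hcon
    simp only [hA, Set.mem_iUnion, Set.mem_setOf_eq, not_exists, not_le] at hcon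
    have hgrid : ∀ j : Fin (k+1),
        |(∑ i, w i * (if ω i ≤ ((j : ℕ) : ℝ)/(k : ℝ) then (1:ℝ) else 0))
          - ((j : ℕ) : ℝ)/(k : ℝ)| ≤ ε/2 := fun j => (hcon j).le
    have hall : ∀ t : Set.Icc (0:ℝ) 1,
        |(∑ i, w i * (if ω i ≤ (t : ℝ) then (1 : ℝ) else 0)) - (t : ℝ)| ≤ ε := by
      intro t
      have := det hk hw_pos ω hgrid t.2.1 t.2.2
      linarith
    exact absurd hω (not_lt.2 (ciSup_le hall))
  calc Pn n {ω : Fin n → ℝ |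
        ε < ⨆ t : Set.Icc (0 : ℝ) 1,
          |(∑ i, w i * (if ω i ≤ (t : ℝ) then (1 : ℝ) else 0)) - (t : ℝ)|}
      ≤ Pn n (⋃ j, A j) := measure_mono hsub
    _ ≤ ∑' j : Fin (k+1), Pn n (A j) := measure_iUnion_le _
    _ = ∑ j : Fin (k+1), Pn n (A j) := tsum_fintype _
    _ ≤ ∑ _j : Fin (k+1), ENNReal.ofReal (Q / (ε/2) ^ 2) := by
        refine Finset.sum_le_sum fun j _ => ?_
        have hj0 : (0:ℝ) ≤ ((j : ℕ) : ℝ)/(k : ℝ) := by positivity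
        have hj1 : ((j : ℕ) : ℝ)/(k : ℝ) ≤ 1 := by
          rw [div_le_one (by exact_mod_cast hk : (0:ℝ) < (k:ℝ))]
          exact_mod_cast Nat.lt_succ_iff.1 j.isLt
        exact cheb w hw_pos hw_sum Q hQ hj0 hj1 (half_pos hε)
    _ = ((k + 1 : ℕ) : ENNReal) * ENNReal.ofReal (Q / (ε/2) ^ 2) := by
        rw [Finset.sum_const, Finset.card_univ, Fintype.card_fin, nsmul_eq_mul]

/-- For each `m`, let `q(m)` be a probability mass function of length `d(m)`
with positive entries, where `d(m) → ∞` and `max_i q_i(m) → 0`.  Let `(U_i^{(m)})_i` be i.i.d.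
uniform on `(0,1)` and `W_m(t) = Σ_i q_i 1{U_i ≤ t} − t`.  Then `sup_{t ∈ [0,1]} |W_m(t)| → 0`
in probability. -/
theorem stmt6 (d : ℕ → ℕ) (q : ∀ m, Fin (d m) → ℝ)
    (hq_pos : ∀ m i, 0 < q m i) (hq_sum : ∀ m, ∑ i, q m i = 1)
    (hd : Tendsto d atTop atTop)
    (hqmax : Tendsto (fun m => ⨆ i : Fin (d m), q m i) atTop (nhds 0)) :
    ∀ ε : ℝ, 0 < ε →
      Tendsto
        (fun m =>
          (Measure.pi fun _ : Fin (d m) => volume.restrict (Set.Ioo (0 : ℝ) 1))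
            {ω : Fin (d m) → ℝ |
              ε < ⨆ t : Set.Icc (0 : ℝ) 1,
                |(∑ i, q m i * (if ω i ≤ (t : ℝ) then (1 : ℝ) else 0)) - (t : ℝ)|})
        atTop (nhds 0) := by
  intro ε hε
  obtain ⟨k, hk1, hk2⟩ : ∃ k : ℕ, 1 ≤ k ∧ (1:ℝ)/(k:ℝ) ≤ ε/2 := by
    refine ⟨⌈2/ε⌉₊ + 1, by omega, ?_⟩
    have hkpos : (0:ℝ) < ((⌈2/ε⌉₊ + 1 : ℕ) : ℝ) := by positivity
    rw [div_le_iff₀ hkpos]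
    have h2e : 2/ε ≤ ((⌈2/ε⌉₊ + 1 : ℕ) : ℝ) := by
      push_cast
      exact (Nat.le_ceil _).trans (by linarith)
    calc (1:ℝ) = ε/2 * (2/ε) := by field_simp
      _ ≤ ε/2 * ((⌈2/ε⌉₊ + 1 : ℕ) : ℝ) := by
          exact mul_le_mul_of_nonneg_left h2e (by linarith)
  have hbound : Tendsto
      (fun m => ((k + 1 : ℕ) : ENNReal) * ENNReal.ofReal ((⨆ i : Fin (d m), q m i) / (ε/2) ^ 2))
      atTop (nhds 0) := by
    have h1 : Tendsto (fun m => (⨆ i : Fin (d m), q m i) / (ε/2) ^ 2) atTop (nhds 0) := by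
      simpa using hqmax.div_const ((ε/2) ^ 2)
    have h2 : Tendsto (fun m => ENNReal.ofReal ((⨆ i : Fin (d m), q m i) / (ε/2) ^ 2))
        atTop (nhds 0) := by
      simpa [ENNReal.ofReal_zero] using (ENNReal.tendsto_ofReal h1)
    have h3 := ENNReal.Tendsto.const_mul (a := ((k + 1 : ℕ) : ENNReal)) h2
      (Or.inr (by simp))
    simpa using h3
  refine tendsto_of_tendsto_of_tendsto_of_le_of_le tendsto_const_nhds hbound
    (fun m => zero_le) (fun m => ?_)
  have hQ : ∀ i : Fin (d m), q m i ≤ ⨆ i : Fin (d m), q m i := fun i =>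
    le_ciSup (Set.Finite.bddAbove (Set.finite_range _)) i
  exact key (d m) (q m) (hq_pos m) (hq_sum m) _ hQ ε hε k hk1 hk2
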